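/- Let M be a matroid on a finite ground set E with |E| = n+1 ≥ 2, let e ∈ E be neither a loop nor a coloop of M, and let ≤ be a linear order on E∖{e} with elements listed as a₀ < a₁ < ⋯ < a_{n−1}. For 0 ≤ i ≤ n let ≤ᵢ be the linear order on E given by a₀ < ⋯ < a_{i−1} < e < a_i < ⋯ < a_{n−1}. Then there exists k with 0 ≤ k ≤ n−1 such that: (i) B_{≤ᵢ}(M) = B_≤(M/e) ∪ {e} for all 0 ≤ i ≤ k; (ii) B_{≤ᵢ}(M) = B_≤(M∖e) for all k+1 ≤ i ≤ n; and (iii) B_≤(M∖e) = B_≤(M/e) ∪ {a_k}. -/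

import Mathlib

open Matroid

variable {α : Type*}

/-- `B₀` is the lex-first basis of the matroid `M` with respect to the order relation `le`:
it is a basis, and for every other basis `B'`, the `le`-least element of the symmetric
difference `B₀ ∆ B'` belongs to `B₀`. -/
def IsLexFirstBasis (M : Matroid α) (le : α → α → Prop) (B₀ : Set α) : Prop :=
  M.IsBase B₀ ∧ ∀ B', M.IsBase B' → B' ≠ B₀ →
    ∀ m ∈ symmDiff B₀ B', (∀ x ∈ symmDiff B₀ B', le m x) → m ∈ B₀

/-- Deletion of a set `D` from the matroid `M`: the restriction of `M` to `M.E \ D`. -/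
def mdelete (M : Matroid α) (D : Set α) : Matroid α := M ↾ (M.E \ D)

/-- Contraction of a set `C` in the matroid `M`, defined via duality:
`M / C = (M✶ \ C)✶`, a matroid on `M.E \ C`. -/
def mcontract (M : Matroid α) (C : Set α) : Matroid α := (M✶ ↾ (M.E \ C))✶



/-- In any finite nonempty set there is a minimum w.r.t. a linear order relation. -/
lemma exists_rel_min (r : α → α → Prop) (hr : IsLinearOrder α r) {S : Set α}
    (hS : S.Finite) (hne : S.Nonempty) : ∃ m ∈ S, ∀ x ∈ S, r m x := by
  classical
  obtain ⟨s, rfl⟩ : ∃ s : Finset α, (s : Set α) = S := ⟨hS.toFinset, hS.coe_toFinset⟩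
  induction s using Finset.induction_on with
  | empty => simp at hne
  | @insert x s hx ih =>
    rcases s.eq_empty_or_nonempty with rfl | hs
    · exact ⟨x, by simp, by simp [hr.toIsPartialOrder.toIsPreorder.toRefl.refl]⟩
    · obtain ⟨m, hm, hmin⟩ := ih (by simpa using hs) (by simpa using hs)
      rcases hr.toTotal.total m x with h | h
      · refine ⟨m, by simp [Finset.mem_coe] at hm ⊢; tauto, ?_⟩
        intro z hz
        simp only [Finset.coe_insert, Set.mem_insert_iff] at hz
        rcases hz with rfl | hz
        · exact h
        · exact hmin z hz
      · refine ⟨x, by simp, ?_⟩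
        intro z hz
        simp only [Finset.coe_insert, Set.mem_insert_iff] at hz
        rcases hz with rfl | hz
        · exact hr.toIsPartialOrder.toIsPreorder.toRefl.refl z
        · exact hr.toIsPartialOrder.toIsPreorder.toIsTrans.trans _ _ _ h (hmin z hz)

/-- Co-exchange: for bases `B₁, B₂` and `x ∈ B₁ \ B₂`, some `y ∈ B₂ \ B₁` can be replaced
by `x` in `B₂`. -/
lemma coexchange (M : Matroid α) {B₁ B₂ : Set α} {x : α}
    (h₁ : M.IsBase B₁) (h₂ : M.IsBase B₂) (hx : x ∈ B₁ \ B₂) :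
    ∃ y ∈ B₂ \ B₁, M.IsBase (insert x (B₂ \ {y})) := by
  have hxE : x ∈ M.E := h₁.subset_ground hx.1
  have hd₁ := h₁.compl_isBase_dual
  have hd₂ := h₂.compl_isBase_dual
  have hx' : x ∈ (M.E \ B₂) \ (M.E \ B₁) := ⟨⟨hxE, hx.2⟩, fun h => h.2 hx.1⟩
  obtain ⟨y, hy, hbase⟩ := hd₂.exchange hd₁ hx'
  have hyB₂ : y ∈ B₂ := by
    rcases hy with ⟨⟨hyE, _⟩, hy2⟩
    by_contra h
    exact hy2 ⟨hyE, h⟩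
  have hyB₁ : y ∉ B₁ := hy.1.2
  have hxy : x ≠ y := fun h => hx.2 (h ▸ hyB₂)
  refine ⟨y, ⟨hyB₂, hyB₁⟩, ?_⟩
  have hsub : insert y ((M.E \ B₂) \ {x}) ⊆ M.E := by
    intro z hz
    rcases hz with rfl | hz
    · exact hy.1.1
    · exact hz.1.1
  have hMb := (Matroid.dual_isBase_iff (M := M) hsub).mp hbase
  have heq : M.E \ insert y ((M.E \ B₂) \ {x}) = insert x (B₂ \ {y}) := by
    ext z
    constructor
    · rintro ⟨hzE, hz⟩
      by_cases hzx : z = x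
      · exact Or.inl hzx
      · refine Or.inr ⟨?_, ?_⟩
        · by_contra hzB
          exact hz (Or.inr ⟨⟨hzE, hzB⟩, hzx⟩)
        · intro h
          exact hz (Or.inl h)
    · rintro (rfl | ⟨hzB, hzy⟩)
      · refine ⟨hxE, fun h => ?_⟩
        rcases h with h1 | h2
        · exact hxy h1
        · exact h2.2 rfl
      · refine ⟨h₂.subset_ground hzB, fun h => ?_⟩
        rcases h with h1 | h2
        · exact hzy h1
        · exact h2.1.2 hzB
  rwa [heq] at hMb

lemma compl_diff_eq_insert {M : Matroid α} {e : α} {B : Set α}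
    (heE : e ∈ M.E) (hB : B ⊆ M.E \ {e}) :
    M.E \ ((M.E \ {e}) \ B) = insert e B := by
  ext z
  constructor
  · rintro ⟨hzE, hz⟩
    by_cases hze : z = e
    · exact Or.inl hze
    · right
      by_contra hzB
      exact hz ⟨⟨hzE, hze⟩, hzB⟩
  · rintro (rfl | hzB)
    · exact ⟨heE, fun h => h.1.2 rfl⟩
    · exact ⟨(hB hzB).1, fun h => h.2 hzB⟩

lemma mdelete_base_iff (M : Matroid α) {e : α} {B₀ : Set α}
    (h₀ : M.IsBase B₀) (he₀ : e ∉ B₀) {B : Set α} :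
    (mdelete M {e}).IsBase B ↔ M.IsBase B ∧ e ∉ B := by
  have hB₀X : B₀ ⊆ M.E \ {e} := fun z hz => ⟨h₀.subset_ground hz, fun h => he₀ (h ▸ hz)⟩
  rw [mdelete, Matroid.isBase_restrict_iff Set.diff_subset]
  constructor
  · intro h
    refine ⟨h₀.isBase_of_isBasis_superset hB₀X h, fun he => (h.subset he).2 rfl⟩
  · rintro ⟨hB, heB⟩
    exact Matroid.IsBase.isBasis_of_subset Set.diff_subset hB
      (fun z hz => ⟨hB.subset_ground hz, fun h => heB (h ▸ hz)⟩)

lemma mcontract_base_iff (M : Matroid α) {e : α} {B₁ : Set α}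
    (h₁ : M.IsBase B₁) (he₁ : e ∈ B₁) {B : Set α} :
    (mcontract M {e}).IsBase B ↔ M.IsBase (insert e B) ∧ e ∉ B := by
  have heE : e ∈ M.E := h₁.subset_ground he₁
  have hXd : M.E \ {e} ⊆ M✶.E := by rw [Matroid.dual_ground]; exact Set.diff_subset
  have hcompl : M.E \ B₁ ⊆ M.E \ {e} := fun z hz => ⟨hz.1, fun h => hz.2 (h ▸ he₁)⟩
  rw [mcontract, Matroid.dual_isBase_iff']
  constructor
  · rintro ⟨h1, h2⟩
    have hBX : B ⊆ M.E \ {e} := by simpa using h2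
    have h1' : (M✶ ↾ (M.E \ {e})).IsBase ((M.E \ {e}) \ B) := by simpa using h1
    rw [Matroid.isBase_restrict_iff hXd] at h1'
    have hbb : M✶.IsBase ((M.E \ {e}) \ B) :=
      (h₁.compl_isBase_dual).isBase_of_isBasis_superset hcompl h1'
    rw [Matroid.dual_isBase_iff (Set.diff_subset.trans Set.diff_subset)] at hbb
    rw [compl_diff_eq_insert heE hBX] at hbb
    exact ⟨hbb, fun he => (hBX he).2 rfl⟩
  · rintro ⟨hbase, heB⟩
    have hBX : B ⊆ M.E \ {e} := fun z hz =>
      ⟨hbase.subset_ground (Set.mem_insert_of_mem _ hz), fun h => heB (h ▸ hz)⟩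
    have h1 : M✶.IsBase ((M.E \ {e}) \ B) := by
      rw [Matroid.dual_isBase_iff (Set.diff_subset.trans Set.diff_subset),
        compl_diff_eq_insert heE hBX]
      exact hbase
    have h2 : M✶.IsBasis ((M.E \ {e}) \ B) (M.E \ {e}) :=
      Matroid.IsBase.isBasis_of_subset hXd h1 Set.diff_subset
    refine ⟨by simpa using h2.restrict_isBase, by simpa using hBX⟩

/-- Uniqueness of the lex-first basis. -/
lemma lexFirstBasis_unique {N : Matroid α} {r : α → α → Prop} (hr : IsLinearOrder α r)
    {B₁ B₂ : Set α} (h₁ : IsLexFirstBasis N r B₁) (h₂ : IsLexFirstBasis N r B₂)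
    (hfin : (symmDiff B₁ B₂).Finite) : B₁ = B₂ := by
  by_contra hne
  have hS : (symmDiff B₁ B₂).Nonempty := by
    rw [Set.nonempty_iff_ne_empty]
    intro h
    exact hne (by simpa [Set.bot_eq_empty] using symmDiff_eq_bot.mp h)
  obtain ⟨m, hm, hmin⟩ := exists_rel_min r hr hfin hS
  have hm₁ : m ∈ B₁ := h₁.2 B₂ h₂.1 (Ne.symm hne) m hm hmin
  have hm₂ : m ∈ B₂ := by
    refine h₂.2 B₁ h₁.1 hne m ?_ ?_
    · rwa [symmDiff_comm]
    · rw [symmDiff_comm]; exact hmin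
  rcases Set.mem_symmDiff.mp hm with h | h
  · exact h.2 hm₂
  · exact h.2 hm₁

theorem stmt11 [Fintype α] (M : Matroid α) (n : ℕ) (hn : 1 ≤ n)
    (hcard : M.E.ncard = n + 1) (e : α) (he : e ∈ M.E)
    (heloop : ¬ ∀ B, M.IsBase B → e ∉ B) (hecoloop : ¬ ∀ B, M.IsBase B → e ∈ B)
    (a : Fin n → α) (hinj : Function.Injective a) (hrange : Set.range a = M.E \ {e})
    (le : α → α → Prop) (hlin : IsLinearOrder α le)
    (hle : ∀ j j' : Fin n, le (a j) (a j') ↔ j ≤ j')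
    (L : Fin (n + 1) → α → α → Prop)
    (hLlin : ∀ i, IsLinearOrder α (L i))
    (hL1 : ∀ (i : Fin (n + 1)) (j j' : Fin n), L i (a j) (a j') ↔ j ≤ j')
    (hL2 : ∀ (i : Fin (n + 1)) (j : Fin n), L i e (a j) ↔ (i : ℕ) ≤ (j : ℕ))
    (hL3 : ∀ (i : Fin (n + 1)) (j : Fin n), L i (a j) e ↔ (j : ℕ) < (i : ℕ))
    (B : Fin (n + 1) → Set α) (hB : ∀ i, IsLexFirstBasis M (L i) (B i))
    (Bd Bc : Set α)
    (hBd : IsLexFirstBasis (mdelete M {e}) le Bd)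
    (hBc : IsLexFirstBasis (mcontract M {e}) le Bc) :
    ∃ k : Fin n,
      (∀ i : Fin (n + 1), (i : ℕ) ≤ (k : ℕ) → B i = Bc ∪ {e}) ∧
      (∀ i : Fin (n + 1), (k : ℕ) < (i : ℕ) → B i = Bd) ∧
      Bd = Bc ∪ {a k} := by
  classical
  -- e is in some base, and outside some base
  obtain ⟨B₁, hB₁base, hB₁e⟩ : ∃ B, M.IsBase B ∧ e ∈ B := by push_neg at heloop; exact heloop
  obtain ⟨B₀, hB₀base, hB₀e⟩ : ∃ B, M.IsBase B ∧ e ∉ B := by push_neg at hecoloop; exact hecoloop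
  have hdel : ∀ {B' : Set α}, (mdelete M {e}).IsBase B' ↔ M.IsBase B' ∧ e ∉ B' :=
    fun {B'} => mdelete_base_iff M hB₀base hB₀e
  have hcon : ∀ {B' : Set α}, (mcontract M {e}).IsBase B' ↔ M.IsBase (insert e B') ∧ e ∉ B' :=
    fun {B'} => mcontract_base_iff M hB₁base hB₁e
  obtain ⟨hBdbase, hBde⟩ : M.IsBase Bd ∧ e ∉ Bd := hdel.mp hBd.1
  obtain ⟨hBcbase, hBce⟩ : M.IsBase (insert e Bc) ∧ e ∉ Bc := hcon.mp hBc.1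
  have hBdX : Bd ⊆ M.E \ {e} := fun z hz => ⟨hBdbase.subset_ground hz, fun h => hBde (h ▸ hz)⟩
  have hBcX : Bc ⊆ M.E \ {e} := fun z hz =>
    ⟨hBcbase.subset_ground (Set.mem_insert_of_mem _ hz), fun h => hBce (h ▸ hz)⟩
  have hx2a : ∀ {z : α}, z ∈ M.E \ {e} → ∃ j, a j = z := by
    intro z hz
    rw [← hrange] at hz
    exact hz
  have hane : ∀ j, a j ≠ e := by
    intro j h
    have : a j ∈ M.E \ {e} := hrange ▸ Set.mem_range_self j
    exact this.2 h
  have haX : ∀ j, a j ∈ M.E \ {e} := fun j => hrange ▸ Set.mem_range_self j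
  -- Bd ≠ Bc
  have hBdBc : Bd ≠ Bc := by
    intro h
    subst h
    have := hBdbase.eq_of_subset_isBase hBcbase (Set.subset_insert _ _)
    exact hBde (this ▸ Set.mem_insert e Bd)
  -- T = symmetric difference of Bd and Bc, and its least element a k
  set T : Set α := symmDiff Bd Bc with hT
  have hTX : T ⊆ M.E \ {e} := by
    intro z hz
    rcases Set.mem_symmDiff.mp hz with h | h
    · exact hBdX h.1
    · exact hBcX h.1
  have hTne : T.Nonempty := by
    rw [Set.nonempty_iff_ne_empty]
    intro h
    exact hBdBc (by simpa [Set.bot_eq_empty] using symmDiff_eq_bot.mp h)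
  obtain ⟨k, hkT, hkmin⟩ : ∃ k : Fin n, a k ∈ T ∧ ∀ j : Fin n, a j ∈ T → k ≤ j := by
    obtain ⟨t, htT⟩ := hTne
    obtain ⟨j₀, hj₀⟩ := hx2a (hTX htT)
    have hfin : {j : Fin n | a j ∈ T}.Finite := Set.toFinite _
    obtain ⟨k, hk, hkm⟩ := Set.exists_min_image {j : Fin n | a j ∈ T} id hfin
      ⟨j₀, by simpa [hj₀] using htT⟩
    exact ⟨k, hk, fun j hj => hkm j hj⟩
  have hkle : ∀ z ∈ T, le (a k) z := by
    intro z hz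
    obtain ⟨j, rfl⟩ := hx2a (hTX hz)
    exact (hle k j).mpr (hkmin j hz)
  have hlerefl : ∀ x, le x x := hlin.toIsPartialOrder.toIsPreorder.toRefl.refl
  have hake : a k ≠ e := hane k
  -- Step 1 : a k ∈ Bd \ Bc
  have hstep1 : a k ∈ Bd ∧ a k ∉ Bc := by
    rcases Set.mem_symmDiff.mp hkT with h | h
    · exact ⟨h.1, h.2⟩
    · exfalso
      obtain ⟨hkBc, hkBd⟩ := h
      obtain ⟨y, ⟨hyBd, hyBc⟩, hbase⟩ :=
        coexchange M hBcbase hBdbase ⟨Set.mem_insert_of_mem _ hkBc, hkBd⟩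
      have hyne : y ≠ e := fun h => hyBc (h ▸ Set.mem_insert e Bc)
      have hynBc : y ∉ Bc := fun h => hyBc (Set.mem_insert_of_mem _ h)
      have hyT : y ∈ T := Set.mem_symmDiff.mpr (Or.inl ⟨hyBd, hynBc⟩)
      have hyak : y ≠ a k := fun h => hkBd (h ▸ hyBd)
      set B' : Set α := insert (a k) (Bd \ {y}) with hB'
      have hB'del : (mdelete M {e}).IsBase B' := by
        refine hdel.mpr ⟨hbase, ?_⟩
        rintro (h | h)
        · exact hake h.symm
        · exact hBde h.1
      have hB'ne : B' ≠ Bd := by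
        intro h
        exact hkBd (h ▸ Set.mem_insert _ _)
      have hmem : a k ∈ symmDiff Bd B' :=
        Set.mem_symmDiff.mpr (Or.inr ⟨Set.mem_insert _ _, hkBd⟩)
      have hleast : ∀ x ∈ symmDiff Bd B', le (a k) x := by
        intro x hx
        rcases Set.mem_symmDiff.mp hx with ⟨hx1, hx2⟩ | ⟨hx1, hx2⟩
        · have hxy : x = y := by
            by_contra hxy
            exact hx2 (Set.mem_insert_of_mem _ ⟨hx1, hxy⟩)
          exact hxy ▸ hkle y hyT
        · have hxk : x = a k := by
            rcases hx1 with h | h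
            · exact h
            · exact absurd h.1 hx2
          exact hxk ▸ hlerefl _
      exact hkBd (hBd.2 B' hB'del hB'ne (a k) hmem hleast)
  obtain ⟨hakBd, hakBc⟩ := hstep1
  have haknBce : a k ∉ insert e Bc := by
    rintro (h | h)
    · exact hake h
    · exact hakBc h
  -- Step 2 : insert (a k) Bc is a base of M
  have hstep2 : M.IsBase (insert (a k) Bc) := by
    obtain ⟨y, ⟨hyBce, hyBd⟩, hbase⟩ :=
      coexchange M hBdbase hBcbase ⟨hakBd, haknBce⟩
    rcases hyBce with rfl | hyBc
    · rwa [Set.insert_diff_self_of_notMem hBce] at hbase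
    · exfalso
      have hyne : y ≠ e := fun h => hBce (h ▸ hyBc)
      have hyT : y ∈ T := Set.mem_symmDiff.mpr (Or.inr ⟨hyBc, hyBd⟩)
      have hyak : y ≠ a k := fun h => hakBc (h ▸ hyBc)
      set B'' : Set α := insert (a k) (insert e Bc \ {y}) with hB''
      have heB'' : e ∈ B'' := Set.mem_insert_of_mem _ ⟨Set.mem_insert _ _, hyne.symm⟩
      set C : Set α := B'' \ {e} with hC
      have hCins : insert e C = B'' := by
        rw [hC, Set.insert_diff_singleton, Set.insert_eq_self.mpr heB'']
      have hCcon : (mcontract M {e}).IsBase C := by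
        refine hcon.mpr ⟨by rwa [hCins], fun h => h.2 rfl⟩
      have hakC : a k ∈ C := ⟨Set.mem_insert _ _, hake⟩
      have hCne : C ≠ Bc := fun h => hakBc (h ▸ hakC)
      have hmem : a k ∈ symmDiff Bc C := Set.mem_symmDiff.mpr (Or.inr ⟨hakC, hakBc⟩)
      have hleast : ∀ x ∈ symmDiff Bc C, le (a k) x := by
        intro x hx
        rcases Set.mem_symmDiff.mp hx with ⟨hx1, hx2⟩ | ⟨hx1, hx2⟩
        · have hxe : x ≠ e := fun h => hBce (h ▸ hx1)
          have hxB'' : x ∉ B'' := fun h => hx2 ⟨h, hxe⟩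
          have hxy : x = y := by
            by_contra hxy
            exact hxB'' (Set.mem_insert_of_mem _ ⟨Set.mem_insert_of_mem _ hx1, hxy⟩)
          exact hxy ▸ hkle y hyT
        · have hxk : x = a k := by
            rcases hx1.1 with h | h
            · exact h
            · exfalso
              rcases h.1 with h' | h'
              · exact hx1.2 h'
              · exact hx2 h'
          exact hxk ▸ hlerefl _
      exact hakBc (hBc.2 C hCcon hCne (a k) hmem hleast)
  -- Step 3 : insert e (Bd \ {a k}) is a base of M
  have hstep3 : M.IsBase (insert e (Bd \ {a k})) := by
    obtain ⟨y, ⟨hyBd, hyBce⟩, hbase⟩ :=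
      coexchange M hBcbase hBdbase ⟨Set.mem_insert _ _, hBde⟩
    have hyne : y ≠ e := fun h => hyBce (h ▸ Set.mem_insert _ _)
    have hynBc : y ∉ Bc := fun h => hyBce (Set.mem_insert_of_mem _ h)
    have hyT : y ∈ T := Set.mem_symmDiff.mpr (Or.inl ⟨hyBd, hynBc⟩)
    by_cases hyak : y = a k
    · rwa [hyak] at hbase
    · exfalso
      set C : Set α := Bd \ {y} with hC
      have hCcon : (mcontract M {e}).IsBase C := by
        refine hcon.mpr ⟨hbase, fun h => hBde h.1⟩
      have hakC : a k ∈ C := ⟨hakBd, fun h => hyak (h.symm)⟩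
      have hCne : C ≠ Bc := fun h => hakBc (h ▸ hakC)
      have hmem : a k ∈ symmDiff Bc C := Set.mem_symmDiff.mpr (Or.inr ⟨hakC, hakBc⟩)
      have hleast : ∀ x ∈ symmDiff Bc C, le (a k) x := by
        intro x hx
        rcases Set.mem_symmDiff.mp hx with ⟨hx1, hx2⟩ | ⟨hx1, hx2⟩
        · have hxBd : x ∉ Bd := by
            intro h
            rcases Classical.em (x = y) with rfl | hxy
            · exact hynBc hx1
            · exact hx2 ⟨h, hxy⟩
          exact hkle x (Set.mem_symmDiff.mpr (Or.inr ⟨hx1, hxBd⟩))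
        · exact hkle x (Set.mem_symmDiff.mpr (Or.inl ⟨hx1.1, hx2⟩))
      exact hakBc (hBc.2 C hCcon hCne (a k) hmem hleast)
  -- Step 4 : Bd = insert (a k) Bc
  have hstep4 : Bd = insert (a k) Bc := by
    by_contra hne2
    have hC1 : (mdelete M {e}).IsBase (insert (a k) Bc) := by
      refine hdel.mpr ⟨hstep2, ?_⟩
      rintro (h | h)
      · exact hake h.symm
      · exact hBce h
    have hC2 : (mcontract M {e}).IsBase (Bd \ {a k}) :=
      hcon.mpr ⟨hstep3, fun h => hBde h.1⟩
    set S : Set α := symmDiff Bd (insert (a k) Bc) with hS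
    have hSne : S.Nonempty := by
      rw [Set.nonempty_iff_ne_empty]
      intro h
      exact hne2 (by simpa [Set.bot_eq_empty] using symmDiff_eq_bot.mp h)
    obtain ⟨m, hmS, hmin⟩ := exists_rel_min le hlin (Set.toFinite S) hSne
    have hSeq : symmDiff Bc (Bd \ {a k}) = S := by
      ext z
      simp only [hS, Set.mem_symmDiff, Set.mem_diff, Set.mem_insert_iff,
        Set.mem_singleton_iff]
      by_cases hz : z = a k
      · subst hz
        simp [hakBd, hakBc]
      · tauto
    have hm1 : m ∈ Bd := hBd.2 (insert (a k) Bc) hC1 (Ne.symm hne2) m hmS hmin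
    have hm2 : m ∈ Bc := by
      refine hBc.2 (Bd \ {a k}) hC2 ?_ m (hSeq ▸ hmS) ?_
      · intro h
        apply hne2
        rw [← h, Set.insert_diff_singleton, Set.insert_eq_self.mpr hakBd]
      · rw [hSeq]; exact hmin
    rcases Set.mem_symmDiff.mp hmS with h | h
    · exact h.2 (Set.mem_insert_of_mem _ hm2)
    · exact h.2 hm1
  -- Dichotomy: each B i is either insert e Bc (if e ∈ B i) or Bd (if e ∉ B i)
  have hdichc : ∀ i, e ∈ B i → B i = insert e Bc := by
    intro i hei
    have hLi := hLlin i
    have hBibase := (hB i).1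
    have hBieq : insert e (B i \ {e}) = B i := by
      rw [Set.insert_diff_singleton, Set.insert_eq_self.mpr hei]
    have hBicon : (mcontract M {e}).IsBase (B i \ {e}) :=
      hcon.mpr ⟨by rwa [hBieq], fun h => h.2 rfl⟩
    have hlex : IsLexFirstBasis (mcontract M {e}) le (B i \ {e}) := by
      refine ⟨hBicon, ?_⟩
      intro B' hB' hne m hm hleast
      obtain ⟨hbase', he'⟩ := hcon.mp hB'
      have hB'X : B' ⊆ M.E \ {e} := fun z hz =>
        ⟨hbase'.subset_ground (Set.mem_insert_of_mem _ hz), fun h => he' (h ▸ hz)⟩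
      have hne2 : insert e B' ≠ B i := by
        intro h
        apply hne
        rw [← h, Set.insert_diff_self_of_notMem he']
      have hSsub : symmDiff (B i \ {e}) B' ⊆ M.E \ {e} := by
        intro z hz
        rcases Set.mem_symmDiff.mp hz with h | h
        · exact ⟨hBibase.subset_ground h.1.1, h.1.2⟩
        · exact hB'X h.1
      have hSeq : symmDiff (B i) (insert e B') = symmDiff (B i \ {e}) B' := by
        ext z
        simp only [Set.mem_symmDiff, Set.mem_diff, Set.mem_insert_iff,
          Set.mem_singleton_iff]
        by_cases hz : z = e
        · subst hz
          simp [hei, he']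
        · tauto
      have hmem : m ∈ symmDiff (B i) (insert e B') := hSeq ▸ hm
      have hleast' : ∀ x ∈ symmDiff (B i) (insert e B'), L i m x := by
        intro x hx
        rw [hSeq] at hx
        obtain ⟨jx, rfl⟩ := hx2a (hSsub hx)
        obtain ⟨jm, rfl⟩ := hx2a (hSsub hm)
        exact (hL1 i jm jx).mpr ((hle jm jx).mp (hleast _ hx))
      have := (hB i).2 (insert e B') hbase' hne2 m hmem hleast'
      exact ⟨this, (hSsub hm).2⟩
    have := lexFirstBasis_unique hlin hlex hBc (Set.toFinite _)
    rw [← hBieq, this]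
  have hdichd : ∀ i, e ∉ B i → B i = Bd := by
    intro i hei
    have hBibase := (hB i).1
    have hBidel : (mdelete M {e}).IsBase (B i) := hdel.mpr ⟨hBibase, hei⟩
    have hBiX : B i ⊆ M.E \ {e} := fun z hz =>
      ⟨hBibase.subset_ground hz, fun h => hei (h ▸ hz)⟩
    have hlex : IsLexFirstBasis (mdelete M {e}) le (B i) := by
      refine ⟨hBidel, ?_⟩
      intro B' hB' hne m hm hleast
      obtain ⟨hbase', he'⟩ := hdel.mp hB'
      have hB'X : B' ⊆ M.E \ {e} := fun z hz =>
        ⟨hbase'.subset_ground hz, fun h => he' (h ▸ hz)⟩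
      have hSsub : symmDiff (B i) B' ⊆ M.E \ {e} := by
        intro z hz
        rcases Set.mem_symmDiff.mp hz with h | h
        · exact hBiX h.1
        · exact hB'X h.1
      have hleast' : ∀ x ∈ symmDiff (B i) B', L i m x := by
        intro x hx
        obtain ⟨jx, rfl⟩ := hx2a (hSsub hx)
        obtain ⟨jm, rfl⟩ := hx2a (hSsub hm)
        exact (hL1 i jm jx).mpr ((hle jm jx).mp (hleast _ hx))
      exact (hB i).2 B' hbase' hne m hm hleast'
    exact lexFirstBasis_unique hlin hlex hBd (Set.toFinite _)
  -- Conclusion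
  refine ⟨k, ?_, ?_, ?_⟩
  · -- i ≤ k : B i = Bc ∪ {e}
    intro i hik
    have hLi := hLlin i
    have hLirefl : ∀ x, L i x x := hLi.toIsPartialOrder.toIsPreorder.toRefl.refl
    rw [Set.union_singleton]
    by_cases hei : e ∈ B i
    · exact hdichc i hei
    · exfalso
      have hBi : B i = Bd := hdichd i hei
      have hne2 : insert e Bc ≠ B i := by
        rw [hBi]
        intro h
        exact hBde (h ▸ Set.mem_insert _ _)
      have hmem : e ∈ symmDiff (B i) (insert e Bc) := by
        rw [hBi]
        exact Set.mem_symmDiff.mpr (Or.inr ⟨Set.mem_insert _ _, hBde⟩)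
      have hleast : ∀ x ∈ symmDiff (B i) (insert e Bc), L i e x := by
        intro x hx
        rw [hBi] at hx
        rcases Set.mem_symmDiff.mp hx with ⟨hx1, hx2⟩ | ⟨hx1, hx2⟩
        · have hxk : x = a k := by
            rw [hstep4] at hx1
            rcases hx1 with h | h
            · exact h
            · exact absurd (Set.mem_insert_of_mem _ h) hx2
          exact hxk ▸ (hL2 i k).mpr hik
        · have hxe : x = e := by
            rcases hx1 with h | h
            · exact h
            · exact absurd (hstep4 ▸ Set.mem_insert_of_mem _ h) hx2
          exact hxe ▸ hLirefl e
      exact hei ((hB i).2 (insert e Bc) hBcbase hne2 e hmem hleast)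
  · -- k < i : B i = Bd
    intro i hki
    by_cases hei : e ∈ B i
    · exfalso
      have hBi : B i = insert e Bc := hdichc i hei
      have hne2 : Bd ≠ B i := by
        rw [hBi]
        intro h
        exact hBde (h ▸ Set.mem_insert _ _)
      have hmem : a k ∈ symmDiff (B i) Bd := by
        rw [hBi]
        exact Set.mem_symmDiff.mpr (Or.inr ⟨hakBd, haknBce⟩)
      have hleast : ∀ x ∈ symmDiff (B i) Bd, L i (a k) x := by
        intro x hx
        rw [hBi] at hx
        rcases Set.mem_symmDiff.mp hx with ⟨hx1, hx2⟩ | ⟨hx1, hx2⟩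
        · have hxe : x = e := by
            rcases hx1 with h | h
            · exact h
            · exact absurd (hstep4 ▸ Set.mem_insert_of_mem _ h) hx2
          exact hxe ▸ (hL3 i k).mpr hki
        · have hxk : x = a k := by
            rw [hstep4] at hx1
            rcases hx1 with h | h
            · exact h
            · exact absurd (Set.mem_insert_of_mem _ h) hx2
          exact hxk ▸ (hL1 i k k).mpr le_rfl
      have := (hB i).2 Bd hBdbase hne2 (a k) hmem hleast
      rw [hBi] at this
      exact haknBce this
    · exact hdichd i hei
  · rw [Set.union_singleton]
    exact hstep4
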